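/- Lower bound on the MoVI residual. For every k ≥ 0, the MoVI iterates satisfy, componentwise, T_{π_{k+1}} h_k − h_k ≥ (1/(k+1)) ( Σ_{j=0}^{k} γ^j P_{j:1} (T_{π_1} q_0 − q_0) + Σ_{j=0}^{k−1} γ^j E'_{k,j} ). -/
import Mathlib


open Finset MeasureTheory
open scoped MeasureTheory

noncomputable section

namespace MoVIFormal

variable {S A : Type} [Fintype S] [Fintype A] [Nonempty S] [Nonempty A]
  [DecidableEq S] [DecidableEq A]

/-- `P` is a transition kernel: `P sa s'` is the probability of moving to `s'` from
state-action pair `sa`. -/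
def IsKernel (P : S × A → S → ℝ) : Prop :=
  (∀ sa s', 0 ≤ P sa s') ∧ ∀ sa, ∑ s', P sa s' = 1

/-- The operator `P_π` acting on `q`-functions. -/
def Pop (P : S × A → S → ℝ) (π : S → A) (q : S × A → ℝ) : S × A → ℝ :=
  fun sa => ∑ s', P sa s' * q (s', π s')

/-- The Bellman evaluation operator `T_π q = r + γ P_π q`. -/
def Tpol (P : S × A → S → ℝ) (r : S × A → ℝ) (γ : ℝ) (π : S → A) (q : S × A → ℝ) :
    S × A → ℝ :=
  fun sa => r sa + γ * Pop P π q sa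

/-- The Bellman optimality operator `T_*`. -/
def Topt (P : S × A → S → ℝ) (r : S × A → ℝ) (γ : ℝ) (q : S × A → ℝ) : S × A → ℝ :=
  fun sa => r sa + γ * ∑ s', P sa s' * (⨆ a', q (s', a'))

/-- `π` is greedy with respect to `q`: `T_π q = T_* q`. -/
def Greedy (P : S × A → S → ℝ) (r : S × A → ℝ) (γ : ℝ) (π : S → A) (q : S × A → ℝ) :
    Prop :=
  Tpol P r γ π q = Topt P r γ q

/-- The stochastic matrix of the operator `P_π`, so that `P_π q = (Pmat P π).mulVec q`. -/
def Pmat (P : S × A → S → ℝ) (π : S → A) : Matrix (S × A) (S × A) ℝ :=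
  fun sa sa' => if sa'.2 = π sa'.1 then P sa sa'.1 else 0

/-- The resolvent matrix `(I - γ P_π)⁻¹`. -/
def Res (P : S × A → S → ℝ) (γ : ℝ) (π : S → A) : Matrix (S × A) (S × A) ℝ :=
  (1 - γ • Pmat P π)⁻¹

/-- The composed kernels `P_{j:i} = P_{π_j} P_{π_{j-1}} ⋯ P_{π_i}` for `i ≤ j`,
and the identity otherwise. -/
def Pcomp (P : S × A → S → ℝ) (π : ℕ → S → A) (j i : ℕ) : Matrix (S × A) (S × A) ℝ :=
  (((List.range' i (j + 1 - i)).reverse).map fun t => Pmat P (π t)).prod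

/-- The MoVI iterates: `π (k+1)` is greedy w.r.t. `h k`,
`q (k+1) = T_{π (k+1)} (q k) + ε (k+1)` and `h k` is the running average of `q 0, …, q k`. -/
def IsMoVI (P : S × A → S → ℝ) (r : S × A → ℝ) (γ : ℝ)
    (π : ℕ → S → A) (q h : ℕ → S × A → ℝ) (ε : ℕ → S × A → ℝ) : Prop :=
  h 0 = q 0 ∧
  (∀ k : ℕ, Greedy P r γ (π (k + 1)) (h k)) ∧
  (∀ k : ℕ, q (k + 1) = fun sa => Tpol P r γ (π (k + 1)) (q k) sa + ε (k + 1) sa) ∧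
  (∀ k : ℕ, h (k + 1) = fun sa => ((k + 1 : ℝ) * h k sa + q (k + 1) sa) / (k + 2))

/-- The negative cumulative error `E_k = -∑_{j=1}^k ε_j`. -/
def Ecum (ε : ℕ → S × A → ℝ) (k : ℕ) : S × A → ℝ :=
  fun sa => -(∑ j ∈ Finset.Icc 1 k, ε j sa)

/-- The weighted negative cumulative error
`E'_{k,j} = -∑_{i=1}^{k-j} P_{i+j:i+1} (I - γ P_{π_i}) ε_i`. -/
def Ew (P : S × A → S → ℝ) (γ : ℝ) (π : ℕ → S → A) (ε : ℕ → S × A → ℝ)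
    (k j : ℕ) : S × A → ℝ :=
  fun sa =>
    -(∑ i ∈ Finset.Icc 1 (k - j),
        (Pcomp P π (i + j) (i + 1)).mulVec ((1 - γ • Pmat P (π i)).mulVec (ε i)) sa)

/-- Supremum norm of a `q`-function. -/
def supNorm (q : S × A → ℝ) : ℝ := ⨆ sa : S × A, |q sa|

/-- `μ`-weighted `ℓ1`-norm of a `q`-function. -/
def l1Norm (μ : S × A → ℝ) (q : S × A → ℝ) : ℝ := ∑ sa, μ sa * |q sa|

/-- `μ` is a probability distribution on `S × A`. -/
def IsDist (μ : S × A → ℝ) : Prop :=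
  (∀ sa, 0 ≤ μ sa) ∧ ∑ sa, μ sa = 1

/-- The discounted cumulative occupancy measure `d_{π,μ} = (1-γ) μ (I - γ P_π)⁻¹`. -/
def docc (P : S × A → S → ℝ) (γ : ℝ) (μ : S × A → ℝ) (π : S → A) : S × A → ℝ :=
  (1 - γ) • Matrix.vecMul μ (Res P γ π)

/-- Operator norm induced by the supremum norm (maximum absolute row sum). -/
def opNormInf (M : Matrix (S × A) (S × A) ℝ) : ℝ :=
  ⨆ sa : S × A, ∑ sa', |M sa sa'|

/-! ### Auxiliary lemmas for the residual lower bound -/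

set_option linter.unusedSectionVars false

lemma pop_eq_mulVec (P : S × A → S → ℝ) (π : S → A) (q : S × A → ℝ) :
    Pop P π q = (Pmat P π).mulVec q := by
  funext sa
  simp only [Pop, Pmat, Matrix.mulVec, dotProduct]
  rw [Fintype.sum_prod_type]
  refine Finset.sum_congr rfl fun s' _ => ?_
  simp [ite_mul]

lemma pmat_nonneg {P : S × A → S → ℝ} (hP : IsKernel P) (π : S → A) (sa sa' : S × A) :
    0 ≤ Pmat P π sa sa' := by
  unfold Pmat; split <;> simp [hP.1]

lemma listprod_nonneg (L : List (Matrix (S × A) (S × A) ℝ))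
    (hL : ∀ M ∈ L, ∀ i j, 0 ≤ M i j) : ∀ i j, 0 ≤ L.prod i j := by
  induction L with
  | nil => intro i j; simp [Matrix.one_apply]; positivity
  | cons M T ih =>
    intro i j
    simp only [List.prod_cons, Matrix.mul_apply]
    refine Finset.sum_nonneg fun t _ => mul_nonneg (hL M (by simp) i t)
      (ih (fun N hN => hL N (by simp [hN])) t j)

lemma pcomp_nonneg {P : S × A → S → ℝ} (hP : IsKernel P) (π : ℕ → S → A) (j i : ℕ)
    (sa sa' : S × A) : 0 ≤ Pcomp P π j i sa sa' := by
  refine listprod_nonneg _ (fun M hM u v => ?_) sa sa'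
  simp only [List.mem_map, List.mem_reverse] at hM
  obtain ⟨t, -, rfl⟩ := hM
  exact pmat_nonneg hP _ u v

lemma pcomp_empty {P : S × A → S → ℝ} (π : ℕ → S → A) {j i : ℕ} (h : j < i) :
    Pcomp P π j i = 1 := by
  unfold Pcomp
  rw [Nat.sub_eq_zero_of_le h]
  simp

lemma pcomp_succ {P : S × A → S → ℝ} (π : ℕ → S → A) {j i : ℕ} (h : i ≤ j + 1) :
    Pcomp P π (j + 1) i = Pmat P (π (j + 1)) * Pcomp P π j i := by
  unfold Pcomp
  rw [show j + 1 + 1 - i = (j + 1 - i) + 1 by omega, List.range'_1_concat]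
  rw [show i + (j + 1 - i) = j + 1 by omega]
  simp

lemma mulVec_mono {M : Matrix (S × A) (S × A) ℝ} (hM : ∀ i j, 0 ≤ M i j)
    {x y : S × A → ℝ} (hxy : ∀ v, x v ≤ y v) (v : S × A) :
    M.mulVec x v ≤ M.mulVec y v :=
  Finset.sum_le_sum fun t _ => mul_le_mul_of_nonneg_left (hxy t) (hM v t)

lemma sum_reindex (f : ℕ → ℕ → ℝ) (k : ℕ) :
    ∑ j ∈ Finset.range k, ∑ i ∈ Finset.Icc 1 (k - j), f (i + j) i
      = ∑ m ∈ Finset.Icc 1 k, ∑ i ∈ Finset.Icc 1 m, f m i := by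
  rw [Finset.sum_sigma', Finset.sum_sigma']
  refine Finset.sum_nbij' (fun p => ⟨p.1 + p.2, p.2⟩) (fun p => ⟨p.1 - p.2, p.2⟩)
    ?_ ?_ ?_ ?_ ?_
  · rintro ⟨j, i⟩ hp
    simp only [Finset.mem_sigma, Finset.mem_range, Finset.mem_Icc] at hp ⊢
    omega
  · rintro ⟨m, i⟩ hp
    simp only [Finset.mem_sigma, Finset.mem_range, Finset.mem_Icc] at hp ⊢
    omega
  · rintro ⟨j, i⟩ hp
    simp only [Finset.mem_sigma, Finset.mem_range, Finset.mem_Icc] at hp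
    show (⟨j + i - i, i⟩ : Σ _ : ℕ, ℕ) = ⟨j, i⟩
    rw [Nat.add_sub_cancel]
  · rintro ⟨m, i⟩ hp
    simp only [Finset.mem_sigma, Finset.mem_range, Finset.mem_Icc] at hp
    show (⟨m - i + i, i⟩ : Σ _ : ℕ, ℕ) = ⟨m, i⟩
    rw [Nat.sub_add_cancel hp.2.2]
  · rintro ⟨j, i⟩ hp
    rw [Nat.add_comm]

lemma tpol_comb (P : S × A → S → ℝ) (r : S × A → ℝ) (γ : ℝ) (π' : S → A)
    (a b : ℝ) (hab : a + b = 1) (x y z : S × A → ℝ)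
    (hx : ∀ v, x v = a * y v + b * z v) (sa : S × A) :
    Tpol P r γ π' x sa = a * Tpol P r γ π' y sa + b * Tpol P r γ π' z sa := by
  simp only [Tpol, Pop]
  have hs : (∑ s', P sa s' * x (s', π' s'))
      = a * (∑ s', P sa s' * y (s', π' s')) + b * (∑ s', P sa s' * z (s', π' s')) := by
    rw [Finset.mul_sum, Finset.mul_sum, ← Finset.sum_add_distrib]
    exact Finset.sum_congr rfl fun s' _ => by rw [hx]; ring
  rw [hs]
  have hb : b = 1 - a := by linarith
  rw [hb]; ring

lemma tpol_add (P : S × A → S → ℝ) (r : S × A → ℝ) (γ : ℝ) (π' : S → A)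
    (x e : S × A → ℝ) (sa : S × A) :
    Tpol P r γ π' (fun v => x v + e v) sa = Tpol P r γ π' x sa + γ * Pop P π' e sa := by
  simp only [Tpol, Pop]
  rw [show (∑ s', P sa s' * (x (s', π' s') + e (s', π' s')))
      = (∑ s', P sa s' * x (s', π' s')) + (∑ s', P sa s' * e (s', π' s')) by
    rw [← Finset.sum_add_distrib]; exact Finset.sum_congr rfl fun s' _ => by ring]
  ring

lemma pop_sub (P : S × A → S → ℝ) (π' : S → A) (x y : S × A → ℝ) (sa : S × A) :
    Pop P π' (fun v => x v - y v) sa = Pop P π' x sa - Pop P π' y sa := by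
  simp only [Pop]
  rw [← Finset.sum_sub_distrib]
  exact Finset.sum_congr rfl fun s' _ => by ring

lemma greedy_ge {P : S × A → S → ℝ} (hP : IsKernel P) (r : S × A → ℝ) {γ : ℝ}
    (hγ : 0 ≤ γ) {πg : S → A} {hq : S × A → ℝ} (hg : Greedy P r γ πg hq)
    (π' : S → A) (sa : S × A) :
    Tpol P r γ π' hq sa ≤ Tpol P r γ πg hq sa := by
  rw [hg]
  simp only [Tpol, Topt, Pop]
  have hsum : (∑ s', P sa s' * hq (s', π' s')) ≤ ∑ s', P sa s' * ⨆ a', hq (s', a') :=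
    Finset.sum_le_sum fun s' _ => mul_le_mul_of_nonneg_left
      (le_ciSup (f := fun a' => hq (s', a')) (Set.Finite.bddAbove (Set.finite_range _)) (π' s')) (hP.1 sa s')
  have := mul_le_mul_of_nonneg_left hsum hγ
  linarith

/-- The one-step lower-bound increment `D'_m`. -/
def DD (P : S × A → S → ℝ) (r : S × A → ℝ) (γ : ℝ) (π : ℕ → S → A)
    (q0 : S × A → ℝ) (ε : ℕ → S × A → ℝ) (m : ℕ) : S × A → ℝ :=
  fun sa =>
    γ ^ m * (Pcomp P π m 1).mulVec (fun v => Tpol P r γ (π 1) q0 v - q0 v) sa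
      - ∑ i ∈ Finset.Icc 1 m,
          γ ^ (m - i) *
            (Pcomp P π m (i + 1)).mulVec ((1 - γ • Pmat P (π i)).mulVec (ε i)) sa

lemma DD_zero (P : S × A → S → ℝ) (r : S × A → ℝ) (γ : ℝ) (π : ℕ → S → A)
    (q0 : S × A → ℝ) (ε : ℕ → S × A → ℝ) (sa : S × A) :
    DD P r γ π q0 ε 0 sa = Tpol P r γ (π 1) q0 sa - q0 sa := by
  simp [DD, pcomp_empty (P := P) π (show (0:ℕ) < 1 by omega), Matrix.one_mulVec]

lemma DD_succ (P : S × A → S → ℝ) (r : S × A → ℝ) (γ : ℝ) (π : ℕ → S → A)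
    (q0 : S × A → ℝ) (ε : ℕ → S × A → ℝ) (m : ℕ) (sa : S × A) :
    DD P r γ π q0 ε (m + 1) sa
      = γ * (Pmat P (π (m + 1))).mulVec (DD P r γ π q0 ε m) sa
        - (1 - γ • Pmat P (π (m + 1))).mulVec (ε (m + 1)) sa := by
  have hfun : DD P r γ π q0 ε m
      = γ ^ m • (Pcomp P π m 1).mulVec (fun v => Tpol P r γ (π 1) q0 v - q0 v)
        - ∑ i ∈ Finset.Icc 1 m,
            γ ^ (m - i) • (Pcomp P π m (i + 1)).mulVec ((1 - γ • Pmat P (π i)).mulVec (ε i)) := by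
    funext v
    simp only [DD, Pi.sub_apply, Pi.smul_apply, smul_eq_mul, Finset.sum_apply]
  have hlin : (Pmat P (π (m + 1))).mulVec (DD P r γ π q0 ε m)
      = γ ^ m • (Pmat P (π (m + 1))).mulVec ((Pcomp P π m 1).mulVec
            (fun v => Tpol P r γ (π 1) q0 v - q0 v))
        - ∑ i ∈ Finset.Icc 1 m,
            γ ^ (m - i) • (Pmat P (π (m + 1))).mulVec
              ((Pcomp P π m (i + 1)).mulVec ((1 - γ • Pmat P (π i)).mulVec (ε i))) := by
    rw [hfun, Matrix.mulVec_sub, Matrix.mulVec_smul]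
    congr 1
    rw [← Matrix.mulVecLin_apply, map_sum]
    refine Finset.sum_congr rfl fun i _ => ?_
    rw [_root_.map_smul, Matrix.mulVecLin_apply]
  have hlin2 : (Pmat P (π (m + 1))).mulVec (DD P r γ π q0 ε m)
      = γ ^ m • (Pcomp P π (m + 1) 1).mulVec (fun v => Tpol P r γ (π 1) q0 v - q0 v)
        - ∑ i ∈ Finset.Icc 1 m,
            γ ^ (m - i) • (Pcomp P π (m + 1) (i + 1)).mulVec
              ((1 - γ • Pmat P (π i)).mulVec (ε i)) := by
    rw [hlin]
    congr 1
    · rw [Matrix.mulVec_mulVec, ← pcomp_succ π (show (1:ℕ) ≤ m + 1 by omega)]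
    · refine Finset.sum_congr rfl fun i hi => ?_
      rw [Finset.mem_Icc] at hi
      rw [Matrix.mulVec_mulVec, ← pcomp_succ π (show i + 1 ≤ m + 1 by omega)]
  rw [hlin2]
  simp only [Pi.sub_apply, Pi.smul_apply, smul_eq_mul, Finset.sum_apply]
  simp only [DD]
  rw [Finset.sum_Icc_succ_top (show 1 ≤ m + 1 by omega)]
  rw [pcomp_empty (P := P) π (show m + 1 < m + 1 + 1 by omega), Matrix.one_mulVec,
    Nat.sub_self, pow_zero, one_mul]
  have hre : ∀ i ∈ Finset.Icc 1 m,
      γ ^ (m + 1 - i) *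
          (Pcomp P π (m + 1) (i + 1)).mulVec ((1 - γ • Pmat P (π i)).mulVec (ε i)) sa
        = γ * (γ ^ (m - i) *
            (Pcomp P π (m + 1) (i + 1)).mulVec ((1 - γ • Pmat P (π i)).mulVec (ε i)) sa) := by
    intro i hi
    rw [Finset.mem_Icc] at hi
    rw [show m + 1 - i = (m - i) + 1 by omega, pow_succ]
    ring
  rw [Finset.sum_congr rfl hre, ← Finset.mul_sum, pow_succ]
  ring

/-- Lower bound on the MoVI residual. -/
theorem movi_residual_lower_bound (P : S × A → S → ℝ) (hP : IsKernel P)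
    (r : S × A → ℝ) (γ : ℝ) (hγ0 : 0 < γ) (hγ1 : γ < 1)
    (π : ℕ → S → A) (q h : ℕ → S × A → ℝ) (ε : ℕ → S × A → ℝ)
    (hmovi : IsMoVI P r γ π q h ε) (k : ℕ) :
    ∀ sa : S × A,
      (1 / (k + 1 : ℝ)) *
          ((∑ j ∈ Finset.range (k + 1),
              γ ^ j *
                (Pcomp P π j 1).mulVec
                  (fun sa' => Tpol P r γ (π 1) (q 0) sa' - q 0 sa') sa) +
            ∑ j ∈ Finset.range k, γ ^ j * Ew P γ π ε k j sa) ≤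
        Tpol P r γ (π (k + 1)) (h k) sa - h k sa := by
  obtain ⟨h0, hgreedy, hqrec, hhrec⟩ := hmovi
  set D : ℕ → S × A → ℝ := DD P r γ π (q 0) ε with hDdef
  set b : ℕ → S × A → ℝ :=
    fun m v => ((m : ℝ) + 1) * (Tpol P r γ (π (m + 1)) (h m) v - h m v) with hbdef
  set c : ℕ → S × A → ℝ :=
    fun m v => Tpol P r γ (π (m + 1)) (q m) v - q m v with hcdef
  have hq_comb : ∀ (m : ℕ) (v : S × A),
      q (m + 1) v = ((m : ℝ) + 2) * h (m + 1) v + (-((m : ℝ) + 1)) * h m v := by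
    intro m v
    have hv : h (m + 1) v = (((m : ℝ) + 1) * h m v + q (m + 1) v) / ((m : ℝ) + 2) := by
      rw [hhrec m]
    have h2 : ((m : ℝ) + 2) ≠ 0 := by positivity
    rw [hv]
    field_simp
    ring
  have step2 : ∀ m : ℕ, (∀ v, D m v ≤ c m v) →
      ∀ v, b m v + D (m + 1) v ≤ b (m + 1) v := by
    intro m hkey v
    have hg1 : Tpol P r γ (π (m + 1)) (h (m + 1)) v
        ≤ Tpol P r γ (π (m + 1 + 1)) (h (m + 1)) v :=
      greedy_ge hP r hγ0.le (hgreedy (m + 1)) (π (m + 1)) v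
    have haff : Tpol P r γ (π (m + 1)) (q (m + 1)) v
        = ((m : ℝ) + 2) * Tpol P r γ (π (m + 1)) (h (m + 1)) v
          + (-((m : ℝ) + 1)) * Tpol P r γ (π (m + 1)) (h m) v :=
      tpol_comb P r γ (π (m + 1)) ((m : ℝ) + 2) (-((m : ℝ) + 1)) (by ring)
        (q (m + 1)) (h (m + 1)) (h m) (hq_comb m) v
    have hc1 : Tpol P r γ (π (m + 1)) (q (m + 1)) v - q (m + 1) v
        = γ * (Pmat P (π (m + 1))).mulVec (c m) v
          - (1 - γ • Pmat P (π (m + 1))).mulVec (ε (m + 1)) v := by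
      simp only [hqrec m]
      rw [tpol_add P r γ (π (m + 1)) (Tpol P r γ (π (m + 1)) (q m)) (ε (m + 1)) v]
      have hT2 : Tpol P r γ (π (m + 1)) (Tpol P r γ (π (m + 1)) (q m)) v
          - Tpol P r γ (π (m + 1)) (q m) v = γ * Pop P (π (m + 1)) (c m) v := by
        rw [hcdef]
        rw [pop_sub P (π (m + 1)) (Tpol P r γ (π (m + 1)) (q m)) (q m) v]
        simp only [Tpol]
        ring
      have hsub : (1 - γ • Pmat P (π (m + 1))).mulVec (ε (m + 1)) v
          = ε (m + 1) v - γ * (Pmat P (π (m + 1))).mulVec (ε (m + 1)) v := by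
        rw [Matrix.sub_mulVec, Matrix.one_mulVec, Matrix.smul_mulVec]
        simp [smul_eq_mul]
      have hpe : Pop P (π (m + 1)) (ε (m + 1)) v
          = (Pmat P (π (m + 1))).mulVec (ε (m + 1)) v :=
        congrFun (pop_eq_mulVec P (π (m + 1)) (ε (m + 1))) v
      have hpe2 : Pop P (π (m + 1)) (c m) v
          = (Pmat P (π (m + 1))).mulVec (c m) v :=
        congrFun (pop_eq_mulVec P (π (m + 1)) (c m)) v
      linear_combination hT2 + γ * hpe2 + γ * hpe + hsub
    have hDrec : D (m + 1) v = γ * (Pmat P (π (m + 1))).mulVec (D m) v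
        - (1 - γ • Pmat P (π (m + 1))).mulVec (ε (m + 1)) v :=
      DD_succ P r γ π (q 0) ε m v
    have hmono : (Pmat P (π (m + 1))).mulVec (D m) v
        ≤ (Pmat P (π (m + 1))).mulVec (c m) v :=
      mulVec_mono (pmat_nonneg hP (π (m + 1))) hkey v
    have step_mid : b m v + (Tpol P r γ (π (m + 1)) (q (m + 1)) v - q (m + 1) v)
        = ((m : ℝ) + 2) * (Tpol P r γ (π (m + 1)) (h (m + 1)) v - h (m + 1) v) := by
      rw [haff, hq_comb m v]
      simp only [hbdef]
      ring
    have hbv1 : b (m + 1) v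
        = ((m : ℝ) + 2) * (Tpol P r γ (π (m + 1 + 1)) (h (m + 1)) v - h (m + 1) v) := by
      simp only [hbdef]
      push_cast
      ring
    have hfin : ((m : ℝ) + 2) * (Tpol P r γ (π (m + 1)) (h (m + 1)) v - h (m + 1) v)
        ≤ ((m : ℝ) + 2) * (Tpol P r γ (π (m + 1 + 1)) (h (m + 1)) v - h (m + 1) v) := by
      have hpos : (0 : ℝ) ≤ (m : ℝ) + 2 := by positivity
      apply mul_le_mul_of_nonneg_left (by linarith) hpos
    have hmul := mul_le_mul_of_nonneg_left hmono hγ0.le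
    rw [hDrec, hbv1]
    linarith [step_mid, hfin, hmul, hc1]
  have key : ∀ m : ℕ, ∀ v, D m v ≤ c m v := by
    intro m
    induction m with
    | zero =>
      intro v
      have hd : D 0 v = Tpol P r γ (π 1) (q 0) v - q 0 v := DD_zero P r γ π (q 0) ε v
      have hc0 : c 0 v = Tpol P r γ (π 1) (q 0) v - q 0 v := by
        simp only [hcdef]
      rw [hd, hc0]
    | succ m ih =>
      intro v
      have h2 := step2 m ih v
      have haff2 : Tpol P r γ (π (m + 1 + 1)) (q (m + 1)) v
          = ((m : ℝ) + 2) * Tpol P r γ (π (m + 1 + 1)) (h (m + 1)) v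
            + (-((m : ℝ) + 1)) * Tpol P r γ (π (m + 1 + 1)) (h m) v :=
        tpol_comb P r γ (π (m + 1 + 1)) ((m : ℝ) + 2) (-((m : ℝ) + 1)) (by ring)
          (q (m + 1)) (h (m + 1)) (h m) (hq_comb m) v
      have hg2 : Tpol P r γ (π (m + 1 + 1)) (h m) v ≤ Tpol P r γ (π (m + 1)) (h m) v :=
        greedy_ge hP r hγ0.le (hgreedy m) (π (m + 1 + 1)) v
      have hcv : c (m + 1) v = Tpol P r γ (π (m + 1 + 1)) (q (m + 1)) v - q (m + 1) v := by
        simp only [hcdef]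
      have hbv1 : b (m + 1) v
          = ((m : ℝ) + 2) * (Tpol P r γ (π (m + 1 + 1)) (h (m + 1)) v - h (m + 1) v) := by
        simp only [hbdef]; push_cast; ring
      have hbv0 : b m v = ((m : ℝ) + 1) * (Tpol P r γ (π (m + 1)) (h m) v - h m v) := by
        simp only [hbdef]
      have hqv := hq_comb m v
      have hm1 : (0 : ℝ) ≤ (m : ℝ) + 1 := by positivity
      have hprod := mul_le_mul_of_nonneg_left hg2 hm1
      nlinarith [h2, hprod, haff2, hcv, hbv1, hbv0, hqv]
  have bsum : ∀ K : ℕ, ∀ v, (∑ m ∈ Finset.range (K + 1), D m v) ≤ b K v := by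
    intro K
    induction K with
    | zero =>
      intro v
      rw [Finset.sum_range_one]
      have hb0 : b 0 v = Tpol P r γ (π (0 + 1)) (h 0) v - h 0 v := by
        simp only [hbdef]; norm_num
      have hc0 : c 0 v = Tpol P r γ (π (0 + 1)) (q 0) v - q 0 v := by
        simp only [hcdef]
      rw [hb0, h0]
      have := key 0 v
      rw [hc0] at this
      exact this
    | succ K ih =>
      intro v
      rw [Finset.sum_range_succ]
      have hs := step2 K (key K) v
      linarith [ih v]
  intro sa
  have hsum_eq :
      (∑ j ∈ Finset.range (k + 1),
          γ ^ j * (Pcomp P π j 1).mulVec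
            (fun sa' => Tpol P r γ (π 1) (q 0) sa' - q 0 sa') sa)
        + (∑ j ∈ Finset.range k, γ ^ j * Ew P γ π ε k j sa)
      = ∑ m ∈ Finset.range (k + 1), D m sa := by
    have hDsplit : (∑ m ∈ Finset.range (k + 1), D m sa)
        = (∑ m ∈ Finset.range (k + 1),
            γ ^ m * (Pcomp P π m 1).mulVec
              (fun sa' => Tpol P r γ (π 1) (q 0) sa' - q 0 sa') sa)
          - ∑ m ∈ Finset.range (k + 1), ∑ i ∈ Finset.Icc 1 m,
              γ ^ (m - i) * (Pcomp P π m (i + 1)).mulVec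
                ((1 - γ • Pmat P (π i)).mulVec (ε i)) sa := by
      rw [← Finset.sum_sub_distrib]
      exact Finset.sum_congr rfl fun m _ => rfl
    have hrange : Finset.range (k + 1) = insert 0 (Finset.Icc 1 k) := by
      ext x
      simp only [Finset.mem_range, Finset.mem_insert, Finset.mem_Icc]
      omega
    have herr : (∑ m ∈ Finset.range (k + 1), ∑ i ∈ Finset.Icc 1 m,
            γ ^ (m - i) * (Pcomp P π m (i + 1)).mulVec
              ((1 - γ • Pmat P (π i)).mulVec (ε i)) sa)
        = ∑ m ∈ Finset.Icc 1 k, ∑ i ∈ Finset.Icc 1 m,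
            γ ^ (m - i) * (Pcomp P π m (i + 1)).mulVec
              ((1 - γ • Pmat P (π i)).mulVec (ε i)) sa := by
      rw [hrange, Finset.sum_insert (by simp)]
      simp
    have e1 : ∀ j ∈ Finset.range k, γ ^ j * Ew P γ π ε k j sa
        = -∑ i ∈ Finset.Icc 1 (k - j),
            γ ^ (i + j - i) * (Pcomp P π (i + j) (i + 1)).mulVec
              ((1 - γ • Pmat P (π i)).mulVec (ε i)) sa := by
      intro j hj
      simp only [Ew]
      rw [mul_neg, Finset.mul_sum]
      congr 1
      refine Finset.sum_congr rfl fun i hi => ?_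
      rw [show i + j - i = j by omega]
    have e2 : (∑ j ∈ Finset.range k, γ ^ j * Ew P γ π ε k j sa)
        = -∑ m ∈ Finset.Icc 1 k, ∑ i ∈ Finset.Icc 1 m,
            γ ^ (m - i) * (Pcomp P π m (i + 1)).mulVec
              ((1 - γ • Pmat P (π i)).mulVec (ε i)) sa := by
      rw [Finset.sum_congr rfl e1, Finset.sum_neg_distrib]
      exact congrArg Neg.neg (sum_reindex (fun m i => γ ^ (m - i) * (Pcomp P π m (i + 1)).mulVec
        ((1 - γ • Pmat P (π i)).mulVec (ε i)) sa) k)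
    rw [hDsplit, herr, e2]
    ring
  rw [hsum_eq]
  have hk : (0 : ℝ) < (k : ℝ) + 1 := by positivity
  have hbk : b k sa = ((k : ℝ) + 1) * (Tpol P r γ (π (k + 1)) (h k) sa - h k sa) := by
    simp only [hbdef]
  have hle := bsum k sa
  rw [show (1 / ((k : ℝ) + 1)) * (∑ m ∈ Finset.range (k + 1), D m sa)
      = (∑ m ∈ Finset.range (k + 1), D m sa) / ((k : ℝ) + 1) by ring]
  rw [div_le_iff₀ hk]
  nlinarith [hle, hbk]


end MoVIFormal
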